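/- Let 0 < s < 3, t > 0, and let w : [0,π] → ℝ be defined by w(φ) = sin φ · (sin²φ + t² cos²φ)^{-(2+s)/2} · Ω̃(φ) where Ω̃ : [0,π] → ℝ is continuous with Ω̃ ≥ c > 0. Define f(t) = (∫₀^π sin²φ · w(φ) dφ) / (2 ∫₀^π cos²φ · w(φ) dφ). Then f(t) → 0 as t → 0⁺ and f(t) → ∞ as t → ∞, and consequently there exists t > 0 with f(t) = 1. -/

import Mathlib

open Real Filter

noncomputable def bse (t φ : ℝ) : ℝ := Real.sin φ ^ 2 + t ^ 2 * Real.cos φ ^ 2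

lemma bse_nonneg (t φ : ℝ) : 0 ≤ bse t φ := by unfold bse; positivity

lemma bse_pos {t : ℝ} (ht : t ≠ 0) (φ : ℝ) : 0 < bse t φ := by
  rcases eq_or_ne (Real.sin φ) 0 with h | h
  · have h2 := Real.sin_sq_add_cos_sq φ
    have ht2 : 0 < t ^ 2 := by positivity
    rw [h] at h2
    unfold bse; rw [h]; nlinarith
  · have : 0 < Real.sin φ ^ 2 := by positivity
    unfold bse; nlinarith [sq_nonneg (t * Real.cos φ)]

lemma bse_cont (t : ℝ) : Continuous (bse t) := by unfold bse; fun_prop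

lemma bse_le_one {t : ℝ} (ht : t ^ 2 ≤ 1) (φ : ℝ) : bse t φ ≤ 1 := by
  have h2 := Real.sin_sq_add_cos_sq φ
  unfold bse; nlinarith [sq_nonneg (Real.cos φ)]

lemma sq_le_bse {t : ℝ} (ht : t ^ 2 ≤ 1) (φ : ℝ) : t ^ 2 ≤ bse t φ := by
  have h2 := Real.sin_sq_add_cos_sq φ
  unfold bse; nlinarith [sq_nonneg (Real.sin φ), sq_nonneg t]

lemma one_le_bse {t : ℝ} (ht : 1 ≤ t ^ 2) (φ : ℝ) : 1 ≤ bse t φ := by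
  have h2 := Real.sin_sq_add_cos_sq φ
  unfold bse; nlinarith [sq_nonneg (Real.cos φ)]

lemma kernel_cont {t : ℝ} (e : ℝ) (ht : t ≠ 0) : Continuous (fun φ => bse t φ ^ e) :=
  (bse_cont t).rpow_const fun φ => Or.inl (bse_pos ht φ).ne'

set_option maxHeartbeats 2000000 in
theorem ratio_f_limits_and_root (s c : ℝ) (hs0 : 0 < s) (hs3 : s < 3) (hc : 0 < c)
    (Ω : ℝ → ℝ) (hΩcont : ContinuousOn Ω (Set.Icc 0 π))
    (hΩc : ∀ φ ∈ Set.Icc (0:ℝ) π, c ≤ Ω φ)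
    (w : ℝ → ℝ → ℝ)
    (hw : ∀ t φ, w t φ =
      Real.sin φ * (Real.sin φ ^ 2 + t ^ 2 * Real.cos φ ^ 2) ^ (-(2 + s) / 2) * Ω φ)
    (f : ℝ → ℝ)
    (hf : ∀ t, f t = (∫ φ in (0:ℝ)..π, Real.sin φ ^ 2 * w t φ) /
      (2 * ∫ φ in (0:ℝ)..π, Real.cos φ ^ 2 * w t φ)) :
    Tendsto f (nhdsWithin 0 (Set.Ioi 0)) (nhds 0) ∧
    Tendsto f atTop atTop ∧
    ∃ t : ℝ, 0 < t ∧ f t = 1 := by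
  set e : ℝ := -(2 + s) / 2 with he
  have he_neg : e < 0 := by rw [he]; linarith
  set Ω' : ℝ → ℝ := fun φ => Ω (min (max φ 0) π) with hΩ'
  have hmem : ∀ φ : ℝ, min (max φ 0) π ∈ Set.Icc (0:ℝ) π := fun φ =>
    ⟨le_min (le_max_right φ 0) pi_pos.le, min_le_right _ _⟩
  have hΩ'cont : Continuous Ω' :=
    hΩcont.comp_continuous (by continuity) hmem
  have hΩ'eq : ∀ φ ∈ Set.Icc (0:ℝ) π, Ω' φ = Ω φ := by
    intro φ hφ
    rw [hΩ']
    simp only [max_eq_left hφ.1, min_eq_left hφ.2]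
  have hΩ'c : ∀ φ, c ≤ Ω' φ := fun φ => hΩc _ (hmem φ)
  obtain ⟨M, hM⟩ : ∃ M, ∀ φ, Ω' φ ≤ M := by
    obtain ⟨M, hM⟩ := (isCompact_Icc.image_of_continuousOn hΩcont).bddAbove
    exact ⟨M, fun φ => hM (Set.mem_image_of_mem Ω (hmem φ))⟩
  have hcM : c ≤ M := (hΩ'c 0).trans (hM 0)
  have hM0 : 0 < M := lt_of_lt_of_le hc hcM
  -- the regularized integrand
  set g : ℝ → ℝ → ℝ := fun t φ => Real.sin φ * bse t φ ^ e * Ω' φ with hg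
  have hgcont : ∀ t : ℝ, t ≠ 0 → Continuous (g t) := by
    intro t ht
    exact (Real.continuous_sin.mul (kernel_cont e ht)).mul hΩ'cont
  have hInt : ∀ t : ℝ, t ≠ 0 → ∀ ψ : ℝ → ℝ, Continuous ψ → ∀ a b : ℝ,
      IntervalIntegrable (fun φ => ψ φ * g t φ) MeasureTheory.volume a b := by
    intro t ht ψ hψ a b
    exact (hψ.mul (hgcont t ht)).intervalIntegrable a b
  -- replace w with g inside the integrals
  set N : ℝ → ℝ := fun t => ∫ φ in (0:ℝ)..π, Real.sin φ ^ 2 * g t φ with hN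
  set D : ℝ → ℝ := fun t => ∫ φ in (0:ℝ)..π, Real.cos φ ^ 2 * g t φ with hD
  have hcongr : ∀ ψ : ℝ → ℝ, ∀ t : ℝ,
      (∫ φ in (0:ℝ)..π, ψ φ * w t φ) = ∫ φ in (0:ℝ)..π, ψ φ * g t φ := by
    intro ψ t
    apply intervalIntegral.integral_congr
    intro φ hφ
    rw [Set.uIcc_of_le pi_pos.le] at hφ
    simp only [hw t φ, hg, hΩ'eq φ hφ, bse]
  have hfND : ∀ t, f t = N t / (2 * D t) := by
    intro t
    rw [hf t, hcongr _ t, hcongr _ t]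
  have hg_nonneg : ∀ t φ : ℝ, 0 ≤ φ → φ ≤ π → 0 ≤ g t φ := by
    intro t φ h0 hπ
    have hsin := Real.sin_nonneg_of_nonneg_of_le_pi h0 hπ
    have h1 := Real.rpow_nonneg (bse_nonneg t φ) e
    have h2 := (hc.trans_le (hΩ'c φ)).le
    rw [hg]
    positivity
  have hg_pos : ∀ t : ℝ, t ≠ 0 → ∀ φ : ℝ, 0 < φ → φ < π → 0 < g t φ := by
    intro t ht φ h0 hπ
    have hsin := Real.sin_pos_of_pos_of_lt_pi h0 hπ
    have h1 := Real.rpow_pos_of_pos (bse_pos ht φ) e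
    have h2 := hc.trans_le (hΩ'c φ)
    rw [hg]
    positivity
  have hNpos : ∀ t : ℝ, 0 < t → 0 < N t := by
    intro t ht
    apply intervalIntegral.intervalIntegral_pos_of_pos_on
      (hInt t ht.ne' _ (by fun_prop) 0 π) _ pi_pos
    intro φ hφ
    have := hg_pos t ht.ne' φ hφ.1 hφ.2
    have hsin := Real.sin_pos_of_pos_of_lt_pi hφ.1 hφ.2
    positivity
  have hDpos : ∀ t : ℝ, 0 < t → 0 < D t := by
    intro t ht
    have hq : (0:ℝ) < π/4 := by positivity
    have hqπ : π/4 < π := by linarith [pi_pos]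
    have hsplit := intervalIntegral.integral_add_adjacent_intervals
      (hInt t ht.ne' _ (by fun_prop : Continuous fun φ => Real.cos φ ^ 2) 0 (π/4))
      (hInt t ht.ne' _ (by fun_prop : Continuous fun φ => Real.cos φ ^ 2) (π/4) π)
    show 0 < ∫ φ in (0:ℝ)..π, Real.cos φ ^ 2 * g t φ
    rw [← hsplit]
    have h1 : 0 < ∫ φ in (0:ℝ)..(π/4), Real.cos φ ^ 2 * g t φ := by
      apply intervalIntegral.intervalIntegral_pos_of_pos_on
        (hInt t ht.ne' _ (by fun_prop) 0 (π/4)) _ hq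
      intro φ hφ
      have hcos : 0 < Real.cos φ := Real.cos_pos_of_mem_Ioo
        ⟨by linarith [pi_pos, hφ.1], by linarith [hφ.2, pi_pos]⟩
      have := hg_pos t ht.ne' φ hφ.1 (hφ.2.trans hqπ)
      positivity
    have h2 : 0 ≤ ∫ φ in (π/4:ℝ)..π, Real.cos φ ^ 2 * g t φ := by
      apply intervalIntegral.integral_nonneg hqπ.le
      intro u hu
      exact mul_nonneg (sq_nonneg _) (hg_nonneg t u (hq.le.trans hu.1) hu.2)
    linarith
  have hfpos : ∀ t : ℝ, 0 < t → 0 < f t := by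
    intro t ht
    rw [hfND t]
    exact div_pos (hNpos t ht) (by linarith [hDpos t ht])
  -- upper bound for N for small t
  have hNup : ∀ t : ℝ, 0 < t → t ≤ 1/2 → N t ≤ M * (1 + t ^ (1-s)) * π := by
    intro t ht ht2
    have htsq : t ^ 2 ≤ 1 := by nlinarith
    have hpt : ∀ φ ∈ Set.Icc (0:ℝ) π, Real.sin φ ^ 2 * g t φ ≤ M * (1 + t ^ (1-s)) := by
      intro φ hφ
      have hsin := Real.sin_nonneg_of_nonneg_of_le_pi hφ.1 hφ.2
      have hbpos := bse_pos ht.ne' φ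
      have hb32 : Real.sin φ ^ 3 ≤ bse t φ ^ ((3:ℝ)/2) := by
        have h1 : Real.sin φ ^ 2 ≤ bse t φ := le_add_of_nonneg_right (by positivity)
        have h2 : ((Real.sin φ ^ 2 : ℝ)) ^ ((3:ℝ)/2) ≤ bse t φ ^ ((3:ℝ)/2) :=
          Real.rpow_le_rpow (sq_nonneg _) h1 (by norm_num)
        calc Real.sin φ ^ 3 = ((Real.sin φ ^ 2 : ℝ)) ^ ((3:ℝ)/2) := by
              rw [← Real.rpow_natCast (Real.sin φ) 2, ← Real.rpow_mul hsin,
                ← Real.rpow_natCast (Real.sin φ) 3]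
              norm_num
          _ ≤ _ := h2
      have hexp : bse t φ ^ ((3:ℝ)/2) * bse t φ ^ e = bse t φ ^ ((1-s)/2) := by
        rw [← Real.rpow_add hbpos]
        congr 1
        rw [he]; ring
      have hkey : bse t φ ^ ((1-s)/2) ≤ 1 + t ^ (1-s) := by
        rcases le_or_gt s 1 with hs1 | hs1
        · have : bse t φ ^ ((1-s)/2) ≤ 1 :=
            Real.rpow_le_one (bse_nonneg t φ) (bse_le_one htsq φ) (by linarith)
          have := Real.rpow_nonneg ht.le (1-s)
          linarith
        · have h1 : bse t φ ^ ((1-s)/2) ≤ (t ^ 2 : ℝ) ^ ((1-s)/2) :=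
            Real.rpow_le_rpow_of_nonpos (by positivity) (sq_le_bse htsq φ) (by linarith)
          have h2 : (t ^ 2 : ℝ) ^ ((1-s)/2) = t ^ (1-s) := by
            rw [← Real.rpow_natCast t 2, ← Real.rpow_mul ht.le]
            congr 1; ring
          linarith
      calc Real.sin φ ^ 2 * g t φ = (Real.sin φ ^ 3 * bse t φ ^ e) * Ω' φ := by
            rw [hg]; ring
        _ ≤ (bse t φ ^ ((3:ℝ)/2) * bse t φ ^ e) * M := by
            have h0 : 0 ≤ Real.sin φ ^ 3 * bse t φ ^ e :=
              mul_nonneg (by positivity) (Real.rpow_nonneg (bse_nonneg t φ) e)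
            apply mul_le_mul _ (hM φ) ((hc.trans_le (hΩ'c φ)).le) (by positivity)
            exact mul_le_mul_of_nonneg_right hb32 (Real.rpow_nonneg (bse_nonneg t φ) e)
        _ = bse t φ ^ ((1-s)/2) * M := by rw [hexp]
        _ ≤ (1 + t ^ (1-s)) * M := mul_le_mul_of_nonneg_right hkey hM0.le
        _ = M * (1 + t ^ (1-s)) := by ring
    have hmono := intervalIntegral.integral_mono_on (μ := MeasureTheory.volume) pi_pos.le
      (hInt t ht.ne' _ (by fun_prop : Continuous fun φ => Real.sin φ ^ 2) 0 π)
      (intervalIntegrable_const) hpt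
    calc N t ≤ ∫ _ in (0:ℝ)..π, M * (1 + t ^ (1-s)) := hmono
      _ = M * (1 + t ^ (1-s)) * π := by
          rw [intervalIntegral.integral_const]; simp [mul_comm]
  -- lower bound for D for small t
  have hDlow : ∀ t : ℝ, 0 < t → t ≤ 1/2 → (3/16) * c * 2^e * t^(-s) ≤ D t := by
    intro t ht ht2
    have htπ : t < π := lt_of_le_of_lt ht2 (by linarith [pi_gt_three])
    have hsplit := intervalIntegral.integral_add_adjacent_intervals
      (hInt t ht.ne' _ (by fun_prop : Continuous fun φ => Real.cos φ ^ 2) 0 t)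
      (hInt t ht.ne' _ (by fun_prop : Continuous fun φ => Real.cos φ ^ 2) t π)
    have h2 : 0 ≤ ∫ φ in t..π, Real.cos φ ^ 2 * g t φ := by
      apply intervalIntegral.integral_nonneg htπ.le
      intro u hu
      exact mul_nonneg (sq_nonneg _) (hg_nonneg t u (ht.le.trans hu.1) hu.2)
    have hpt : ∀ φ ∈ Set.Icc (0:ℝ) t, (3/8)*c*(2*t^2)^e * φ ≤ Real.cos φ ^ 2 * g t φ := by
      intro φ hφ
      have hφt : φ ≤ t := hφ.2
      have hφ0 : 0 ≤ φ := hφ.1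
      have hsinl : φ/2 ≤ Real.sin φ := by
        have hπ2 : φ ≤ π/2 := by linarith [pi_gt_three]
        have h24 : (1:ℝ)/2 ≤ 2/π := by
          rw [div_le_div_iff₀ (by norm_num) pi_pos]
          linarith [pi_le_four]
        calc φ/2 = (1/2) * φ := by ring
          _ ≤ (2/π) * φ := mul_le_mul_of_nonneg_right h24 hφ0
          _ ≤ Real.sin φ := Real.mul_le_sin hφ0 hπ2
      have hcosl : 3/4 ≤ Real.cos φ ^ 2 := by
        have h1 := Real.sin_sq_le_sq (x := φ)
        have h2 := Real.sin_sq_add_cos_sq φ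
        nlinarith
      have hbse : bse t φ ≤ 2 * t^2 := by
        have h1 := Real.sin_sq_le_sq (x := φ)
        have h3 := Real.cos_sq_le_one φ
        unfold bse
        nlinarith [sq_nonneg t]
      have hbe : (2*t^2)^e ≤ bse t φ ^ e :=
        Real.rpow_le_rpow_of_nonpos (bse_pos ht.ne' φ) hbse he_neg.le
      have hΩφ : c ≤ Ω' φ := hΩ'c φ
      have h2te : (0:ℝ) ≤ (2*t^2)^e := Real.rpow_nonneg (by positivity) e
      calc (3/8)*c*(2*t^2)^e*φ = (3/4)*((φ/2)*((2*t^2)^e*c)) := by ring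
        _ ≤ Real.cos φ ^ 2 * (Real.sin φ * (bse t φ ^ e * Ω' φ)) := by
            have hsφ : 0 ≤ Real.sin φ := by linarith
            apply mul_le_mul hcosl _ _ (sq_nonneg _)
            · apply mul_le_mul hsinl _ _ hsφ
              · exact mul_le_mul hbe hΩφ hc.le (Real.rpow_nonneg (bse_nonneg t φ) e)
              · exact mul_nonneg h2te hc.le
            · exact mul_nonneg (by linarith) (mul_nonneg h2te hc.le)
        _ = Real.cos φ ^ 2 * g t φ := by rw [hg]; ring
    have h1 : (3/8)*c*(2*t^2)^e * (t^2/2) ≤ ∫ φ in (0:ℝ)..t, Real.cos φ ^ 2 * g t φ := by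
      have := intervalIntegral.integral_mono_on (μ := MeasureTheory.volume) ht.le
        ((continuous_const.mul continuous_id).intervalIntegrable 0 t)
        (hInt t ht.ne' _ (by fun_prop) 0 t) hpt
      calc (3/8)*c*(2*t^2)^e * (t^2/2)
          = ∫ φ in (0:ℝ)..t, (3/8)*c*(2*t^2)^e * φ := by
            rw [intervalIntegral.integral_const_mul, integral_id]
            ring
        _ ≤ _ := this
    have hpow : (2*t^2:ℝ)^e * t^2 = 2^e * t^(-s) := by
      rw [Real.mul_rpow (by norm_num) (sq_nonneg t), mul_assoc]
      congr 1
      rw [← Real.rpow_natCast t 2, ← Real.rpow_mul ht.le, ← Real.rpow_add ht]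
      congr 1
      push_cast
      rw [he]; ring
    have heq : (3/8)*c*(2*t^2)^e*(t^2/2) = (3/16)*c*2^e*t^(-s) := by
      linear_combination (3/16)*c*hpow
    have hDt : D t = (∫ φ in (0:ℝ)..t, Real.cos φ ^ 2 * g t φ)
        + ∫ φ in t..π, Real.cos φ ^ 2 * g t φ := by
      rw [hD, hsplit]
    rw [hDt, ← heq]
    linarith
  -- small-t bound on f and part 1
  have h2e : (0:ℝ) < 2^e := Real.rpow_pos_of_pos two_pos e
  have hC0pos : 0 < (8*M*π)/(3*c*2^e) :=
    div_pos (by positivity) (by positivity)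
  have hsmall : ∀ t : ℝ, 0 < t → t ≤ 1/2 →
      f t ≤ (8*M*π)/(3*c*2^e) * (t^s + t) := by
    intro t ht ht2
    have hD2 : 0 < 2 * D t := by linarith [hDpos t ht]
    rw [hfND t, div_le_iff₀ hD2]
    have hA : t^s * t^(-s) = 1 := by
      rw [← Real.rpow_add ht]; simp
    have hB : t * t^(-s) = t^(1-s) := by
      nth_rewrite 1 [← Real.rpow_one t]
      rw [← Real.rpow_add ht]
      ring_nf
    have hone : (8/(3*c*2^e))*((3/8)*c*2^e) = 1 := by field_simp
    have E : (8*M*π)/(3*c*2^e)*(t^s+t)*(2*((3/16)*c*2^e*t^(-s))) = M*(1+t^(1-s))*π := by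
      calc (8*M*π)/(3*c*2^e)*(t^s+t)*(2*((3/16)*c*2^e*t^(-s)))
          = (M*π) * ((t^s*t^(-s)) + (t*t^(-s))) * ((8/(3*c*2^e))*((3/8)*c*2^e)) := by ring
        _ = M*(1+t^(1-s))*π := by rw [hA, hB, hone]; ring
    have hC0t : 0 ≤ (8*M*π)/(3*c*2^e)*(t^s+t) :=
      mul_nonneg hC0pos.le (add_nonneg (Real.rpow_nonneg ht.le s) ht.le)
    calc N t ≤ M*(1+t^(1-s))*π := hNup t ht ht2
      _ = (8*M*π)/(3*c*2^e)*(t^s+t)*(2*((3/16)*c*2^e*t^(-s))) := E.symm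
      _ ≤ (8*M*π)/(3*c*2^e)*(t^s+t)*(2*D t) := by
          apply mul_le_mul_of_nonneg_left _ hC0t
          linarith [hDlow t ht ht2]
  have hpart1 : Tendsto f (nhdsWithin 0 (Set.Ioi 0)) (nhds 0) := by
    have h1 : ContinuousAt (fun t : ℝ => (8*M*π)/(3*c*2^e) * (t^s+t)) 0 :=
      continuousAt_const.mul ((Real.continuousAt_rpow_const 0 s (Or.inr hs0.le)).add continuousAt_id)
    have h2 := h1.tendsto
    simp only [Real.zero_rpow hs0.ne', add_zero, mul_zero] at h2
    have hBt : Tendsto (fun t : ℝ => (8*M*π)/(3*c*2^e) * (t^s+t))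
        (nhdsWithin 0 (Set.Ioi 0)) (nhds 0) := tendsto_nhdsWithin_of_tendsto_nhds h2
    apply tendsto_of_tendsto_of_tendsto_of_le_of_le' tendsto_const_nhds hBt
    · filter_upwards [self_mem_nhdsWithin] with t ht
      exact (hfpos t ht).le
    · filter_upwards [Ioo_mem_nhdsGT_of_mem
        (Set.left_mem_Ico.mpr (by norm_num : (0:ℝ) < 1/2))] with t ht
      exact hsmall t ht.1 ht.2.le
  -- large t : upper bound for D
  have hDup : ∀ t : ℝ, 2 ≤ t → D t ≤ 2*M/t^2 := by
    intro t htl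
    have ht0 : 0 < t := by linarith
    have ht1 : 1 ≤ t^2 := by nlinarith
    have hpt : ∀ φ ∈ Set.Icc (0:ℝ) π, Real.cos φ^2 * g t φ ≤ (M/t^2) * Real.sin φ := by
      intro φ hφ
      have hsin := Real.sin_nonneg_of_nonneg_of_le_pi hφ.1 hφ.2
      have hbpos := bse_pos ht0.ne' φ
      have ht2p : (0:ℝ) < t^2 := by positivity
      have hkey : Real.cos φ^2 * bse t φ ^ e ≤ 1/t^2 := by
        have h1 : Real.cos φ^2 ≤ bse t φ / t^2 := by
          rw [le_div_iff₀ ht2p]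
          unfold bse; nlinarith [sq_nonneg (Real.sin φ)]
        have h2 : Real.cos φ^2 * bse t φ ^ e ≤ (bse t φ / t^2) * bse t φ ^ e :=
          mul_le_mul_of_nonneg_right h1 (Real.rpow_nonneg (bse_nonneg t φ) e)
        have h3 : (bse t φ / t^2) * bse t φ ^ e = bse t φ ^ (1+e) / t^2 := by
          rw [Real.rpow_add hbpos, Real.rpow_one]; ring
        have h4 : bse t φ ^ (1+e) ≤ 1 :=
          Real.rpow_le_one_of_one_le_of_nonpos (one_le_bse ht1 φ) (by rw [he]; linarith)
        calc Real.cos φ^2 * bse t φ^e ≤ bse t φ^(1+e)/t^2 := by rw [← h3]; exact h2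
          _ ≤ 1/t^2 := by gcongr
      calc Real.cos φ^2 * g t φ
          = (Real.cos φ^2 * bse t φ^e) * (Real.sin φ * Ω' φ) := by rw [hg]; ring
        _ ≤ (1/t^2) * (Real.sin φ * M) := by
            apply mul_le_mul hkey _ (mul_nonneg hsin (hc.trans_le (hΩ'c φ)).le)
              (by positivity)
            exact mul_le_mul_of_nonneg_left (hM φ) hsin
        _ = (M/t^2) * Real.sin φ := by ring
    have hmono := intervalIntegral.integral_mono_on (μ := MeasureTheory.volume) pi_pos.le
      (hInt t ht0.ne' _ (by fun_prop) 0 π)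
      ((continuous_const.mul Real.continuous_sin).intervalIntegrable 0 π) hpt
    calc D t ≤ ∫ φ in (0:ℝ)..π, (M/t^2)*Real.sin φ := hmono
      _ = 2*M/t^2 := by
          rw [intervalIntegral.integral_const_mul, integral_sin, Real.cos_zero, Real.cos_pi]
          ring
  -- large t : lower bound for N
  have hNlow : ∀ t : ℝ, 2 ≤ t → 2^e*c/(4*t) ≤ N t := by
    intro t htl
    have ht0 : 0 < t := by linarith
    have hinv : 1/t ≤ 1/2 := by
      rw [div_le_div_iff₀ ht0 two_pos]; linarith
    have hinv0 : 0 < 1/t := by positivity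
    have ha0 : 0 ≤ π/2 - 1/t := by linarith [pi_gt_three]
    have hab : π/2 - 1/t ≤ π/2 + 1/t := by linarith
    have hbπ : π/2 + 1/t ≤ π := by linarith [pi_gt_three]
    have hs2 := intervalIntegral.integral_add_adjacent_intervals
      (hInt t ht0.ne' _ (by fun_prop : Continuous fun φ => Real.sin φ ^ 2) (π/2 - 1/t) (π/2 + 1/t))
      (hInt t ht0.ne' _ (by fun_prop : Continuous fun φ => Real.sin φ ^ 2) (π/2 + 1/t) π)
    have hs1 := intervalIntegral.integral_add_adjacent_intervals
      (hInt t ht0.ne' _ (by fun_prop : Continuous fun φ => Real.sin φ ^ 2) 0 (π/2 - 1/t))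
      ((hInt t ht0.ne' _ (by fun_prop : Continuous fun φ => Real.sin φ ^ 2) (π/2 - 1/t) (π/2 + 1/t)).trans
        (hInt t ht0.ne' _ (by fun_prop : Continuous fun φ => Real.sin φ ^ 2) (π/2 + 1/t) π))
    have hout1 : 0 ≤ ∫ φ in (0:ℝ)..(π/2 - 1/t), Real.sin φ ^ 2 * g t φ := by
      apply intervalIntegral.integral_nonneg ha0
      intro u hu
      exact mul_nonneg (sq_nonneg _) (hg_nonneg t u hu.1 (by linarith [hu.2]))
    have hout2 : 0 ≤ ∫ φ in (π/2 + 1/t:ℝ)..π, Real.sin φ ^ 2 * g t φ := by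
      apply intervalIntegral.integral_nonneg hbπ
      intro u hu
      exact mul_nonneg (sq_nonneg _) (hg_nonneg t u (le_trans (by linarith) hu.1) hu.2)
    have hpt : ∀ φ ∈ Set.Icc (π/2 - 1/t) (π/2 + 1/t),
        2^e*c/8 ≤ Real.sin φ ^ 2 * g t φ := by
      intro φ hφ
      have hd1 : (π/2 - φ)^2 ≤ (1/t)^2 := by nlinarith [hφ.1, hφ.2]
      have hsin : 1/2 ≤ Real.sin φ := by
        have h1 := Real.one_sub_sq_div_two_le_cos (x := π/2 - φ)
        rw [Real.cos_pi_div_two_sub] at h1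
        nlinarith
      have hcossq : Real.cos φ^2 ≤ 1/t^2 := by
        have h1 := Real.sin_sq_le_sq (x := π/2 - φ)
        rw [Real.sin_pi_div_two_sub] at h1
        calc Real.cos φ^2 ≤ (π/2 - φ)^2 := h1
          _ ≤ (1/t)^2 := hd1
          _ = 1/t^2 := by ring
      have hbse2 : bse t φ ≤ 2 := by
        have h1 : t^2 * Real.cos φ^2 ≤ 1 := by
          calc t^2 * Real.cos φ^2 ≤ t^2 * (1/t^2) :=
                mul_le_mul_of_nonneg_left hcossq (by positivity)
            _ = 1 := by field_simp
        have h2 := Real.sin_sq_le_one φ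
        unfold bse; linarith
      have hbe : (2:ℝ)^e ≤ bse t φ ^ e :=
        Real.rpow_le_rpow_of_nonpos (bse_pos ht0.ne' φ) hbse2 he_neg.le
      have hsφ : (0:ℝ) ≤ Real.sin φ := by linarith
      have hsinsq : 1/4 ≤ Real.sin φ^2 := by nlinarith
      calc 2^e*c/8 = (1/4)*((1/2)*((2:ℝ)^e*c)) := by ring
        _ ≤ Real.sin φ^2 * (Real.sin φ * (bse t φ^e * Ω' φ)) := by
            apply mul_le_mul hsinsq _ _ (sq_nonneg _)
            · apply mul_le_mul hsin _ _ hsφ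
              · exact mul_le_mul hbe (hΩ'c φ) hc.le (Real.rpow_nonneg (bse_nonneg t φ) e)
              · exact mul_nonneg h2e.le hc.le
            · exact mul_nonneg (by norm_num) (mul_nonneg h2e.le hc.le)
        _ = Real.sin φ^2 * g t φ := by rw [hg]; ring
    have hmid : 2^e*c/(4*t) ≤ ∫ φ in (π/2 - 1/t:ℝ)..(π/2 + 1/t), Real.sin φ ^ 2 * g t φ := by
      have hmono := intervalIntegral.integral_mono_on (μ := MeasureTheory.volume) hab
        (intervalIntegrable_const)
        (hInt t ht0.ne' _ (by fun_prop) (π/2 - 1/t) (π/2 + 1/t)) hpt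
      calc 2^e*c/(4*t) = (π/2 + 1/t - (π/2 - 1/t)) * (2^e*c/8) := by
            field_simp; ring
        _ = ∫ _ in (π/2 - 1/t:ℝ)..(π/2 + 1/t), (2^e*c/8 : ℝ) := by
            rw [intervalIntegral.integral_const, smul_eq_mul]
        _ ≤ _ := hmono
    have hNt : N t = (∫ φ in (0:ℝ)..(π/2 - 1/t), Real.sin φ ^ 2 * g t φ)
        + ((∫ φ in (π/2 - 1/t:ℝ)..(π/2 + 1/t), Real.sin φ ^ 2 * g t φ)
          + ∫ φ in (π/2 + 1/t:ℝ)..π, Real.sin φ ^ 2 * g t φ) := by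
      rw [hN, hs2, hs1]
    rw [hNt]
    linarith
  -- combine: linear lower bound for f
  have hC2pos : 0 < 2^e*c/(16*M) := div_pos (mul_pos h2e hc) (by linarith)
  have hbig : ∀ t : ℝ, 2 ≤ t → 2^e*c/(16*M) * t ≤ f t := by
    intro t htl
    have ht0 : 0 < t := by linarith
    rw [hfND t]
    have h1 : 2^e*c/(4*t) / (2*(2*M/t^2)) ≤ N t/(2*D t) := by
      apply div_le_div₀ (hNpos t ht0).le (hNlow t htl) (by linarith [hDpos t ht0])
      have := hDup t htl
      linarith
    refine le_trans (le_of_eq ?_) h1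
    field_simp
    ring
  have hpart2 : Tendsto f atTop atTop :=
    tendsto_atTop_mono' atTop ((eventually_ge_atTop 2).mono hbig)
      (Tendsto.const_mul_atTop hC2pos tendsto_id)
  -- continuity of N and D on (0, ∞)
  have hbJ : Continuous (fun p : (Set.Ioi (0:ℝ)) × ℝ => bse (p.1:ℝ) p.2) := by
    unfold bse; fun_prop
  have hKJ : Continuous (fun p : (Set.Ioi (0:ℝ)) × ℝ => bse (p.1:ℝ) p.2 ^ e) :=
    hbJ.rpow_const fun p => Or.inl (bse_pos (ne_of_gt p.1.2) p.2).ne'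
  have hgJ : Continuous (fun p : (Set.Ioi (0:ℝ)) × ℝ => g (p.1:ℝ) p.2) := by
    rw [hg]
    exact ((Real.continuous_sin.comp continuous_snd).mul hKJ).mul
      (hΩ'cont.comp continuous_snd)
  have hNcont : ContinuousOn N (Set.Ioi 0) := by
    rw [continuousOn_iff_continuous_restrict]
    refine intervalIntegral.continuous_parametric_intervalIntegral_of_continuous'
      (f := fun (x : Set.Ioi (0:ℝ)) (φ : ℝ) => Real.sin φ ^ 2 * g (x:ℝ) φ)
      ?_ 0 π
    show Continuous (fun p : (Set.Ioi (0:ℝ)) × ℝ => Real.sin p.2 ^ 2 * g (p.1:ℝ) p.2)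
    exact (((Real.continuous_sin.comp continuous_snd).pow 2).mul hgJ)
  have hDcont : ContinuousOn D (Set.Ioi 0) := by
    rw [continuousOn_iff_continuous_restrict]
    refine intervalIntegral.continuous_parametric_intervalIntegral_of_continuous'
      (f := fun (x : Set.Ioi (0:ℝ)) (φ : ℝ) => Real.cos φ ^ 2 * g (x:ℝ) φ)
      ?_ 0 π
    show Continuous (fun p : (Set.Ioi (0:ℝ)) × ℝ => Real.cos p.2 ^ 2 * g (p.1:ℝ) p.2)
    exact (((Real.continuous_cos.comp continuous_snd).pow 2).mul hgJ)
  have hfcont : ContinuousOn f (Set.Ioi 0) := by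
    have h1 : ContinuousOn (fun t => N t / (2 * D t)) (Set.Ioi 0) :=
      hNcont.div (continuousOn_const.mul hDcont)
        (fun t ht => by have := hDpos t ht; intro h; linarith [h])
    exact ContinuousOn.congr h1 (fun t ht => hfND t)
  -- find endpoints and apply the intermediate value theorem
  obtain ⟨t₀, ht₀lt, ht₀pos⟩ :=
    ((hpart1.eventually_lt_const one_pos).and
      (eventually_mem_nhdsWithin (s := Set.Ioi (0:ℝ)) (a := (0:ℝ)))).exists
  obtain ⟨t₁, ht₁gt, ht₁ge⟩ :=
    ((hpart2.eventually_gt_atTop 1).and (eventually_ge_atTop t₀)).exists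
  have hsub : Set.Icc t₀ t₁ ⊆ Set.Ioi 0 := fun x hx => lt_of_lt_of_le ht₀pos hx.1
  obtain ⟨x, hx, hfx⟩ := intermediate_value_Icc ht₁ge (hfcont.mono hsub)
    ⟨ht₀lt.le, ht₁gt.le⟩
  exact ⟨hpart1, hpart2, x, lt_of_lt_of_le ht₀pos hx.1, hfx⟩
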